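/- Let (a_ξ)_{ξ∈Λ_n} be standard complex Gaussians, independent except for a_{-ξ} = conj(a_ξ), with n not a perfect square, and let Λ_n⁺ = {ξ ∈ Λ_n : ξ₂ > 0}, so #Λ_n⁺ = N_n/2. Then ∫_{𝕋²} H_4(T_n(x)) dx = (6/N_n)·( (N_n/2)^{-1/2} Σ_{ξ∈Λ_n⁺} (|a_ξ|² − 1) )² − (3/N_n²) Σ_{ξ∈Λ_n} |a_ξ|⁴, where T_n(x) = N_n^{-1/2} Σ_{ξ∈Λ_n} a_ξ e^{2πi⟨ξ,x⟩} and H_4(t) = t⁴ − 6t² + 3. -/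

import Mathlib

open MeasureTheory
open scoped BigOperators
open Complex

noncomputable def Efn (ξ : ℤ × ℤ) (x : ℝ × ℝ) : ℂ :=
  Complex.exp (2 * Real.pi * Complex.I * ((ξ.1 : ℂ) * (x.1 : ℂ) + (ξ.2 : ℂ) * (x.2 : ℂ)))

lemma Efn_cont (ξ : ℤ × ℤ) : Continuous (Efn ξ) := by
  apply Complex.continuous_exp.comp
  fun_prop

lemma Efn_mul (ξ η : ℤ × ℤ) (x : ℝ × ℝ) : Efn ξ x * Efn η x = Efn (ξ + η) x := by
  rw [Efn, Efn, Efn, ← Complex.exp_add]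
  congr 1
  simp only [Prod.fst_add, Prod.snd_add]
  push_cast
  ring

lemma int1d (k : ℤ) : ∫ t in Set.Icc (0:ℝ) 1, Complex.exp (2 * Real.pi * Complex.I * k * t)
    = if k = 0 then 1 else 0 := by
  rw [integral_Icc_eq_integral_Ioc, ← intervalIntegral.integral_of_le (by norm_num : (0:ℝ) ≤ 1)]
  by_cases hk : k = 0
  · simp [hk]
  · rw [if_neg hk, integral_exp_mul_complex]
    · have h1 : (2 * Real.pi * Complex.I * k * (1:ℝ)) = (k : ℂ) * (2 * Real.pi * Complex.I) := by
        push_cast; ring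
      have h0 : (2 * Real.pi * Complex.I * k * (0:ℝ)) = 0 := by push_cast; ring
      rw [h1, h0, Complex.exp_int_mul_two_pi_mul_I, Complex.exp_zero]
      simp
    · simp [Complex.ext_iff, Real.pi_ne_zero, hk]

lemma int2d (ξ : ℤ × ℤ) :
    ∫ x in Set.Icc ((0:ℝ),(0:ℝ)) ((1:ℝ),(1:ℝ)), Efn ξ x = if ξ = 0 then 1 else 0 := by
  have hI : IntegrableOn (Efn ξ) (Set.Icc ((0:ℝ),(0:ℝ)) ((1:ℝ),(1:ℝ))) volume :=
    (Efn_cont ξ).continuousOn.integrableOn_compact isCompact_Icc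
  rw [Set.Icc_prod_eq, Measure.volume_eq_prod] at hI ⊢
  rw [MeasureTheory.setIntegral_prod (Efn ξ) hI]
  have key : ∀ x : ℝ, ∫ y in Set.Icc (0:ℝ) 1, Efn ξ (x, y)
      = Complex.exp (2 * Real.pi * Complex.I * ξ.1 * x) * (if ξ.2 = 0 then 1 else 0) := by
    intro x
    have : ∀ y : ℝ, Efn ξ (x, y) = Complex.exp (2 * Real.pi * Complex.I * ξ.1 * x) *
        Complex.exp (2 * Real.pi * Complex.I * ξ.2 * y) := by
      intro y; rw [Efn, ← Complex.exp_add]; congr 1; push_cast; ring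
    simp only [this]
    rw [MeasureTheory.integral_const_mul, int1d]
  simp only [key]
  rw [MeasureTheory.integral_mul_const, int1d]
  by_cases h1 : ξ.1 = 0 <;> by_cases h2 : ξ.2 = 0 <;>
    simp [h1, h2, Prod.ext_iff]

lemma perp_perp (v d s : ℤ × ℤ) (hv : v ≠ 0)
    (hd : d.1 * v.1 + d.2 * v.2 = 0) (hs : s.1 * v.1 + s.2 * v.2 = 0)
    (hds : d.1 * s.1 + d.2 * s.2 = 0) : d = 0 ∨ s = 0 := by
  have hcross : d.1 * s.2 - d.2 * s.1 = 0 := by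
    have hv1 : v.1 ≠ 0 ∨ v.2 ≠ 0 := by
      by_contra hc
      push_neg at hc
      exact hv (Prod.ext hc.1 hc.2)
    rcases hv1 with h1 | h2
    · have : v.1 * (d.1 * s.2 - d.2 * s.1) = 0 := by linear_combination s.2 * hd - d.2 * hs
      exact (mul_eq_zero.mp this).resolve_left h1
    · have : v.2 * (d.1 * s.2 - d.2 * s.1) = 0 := by linear_combination d.1 * hs - s.1 * hd
      exact (mul_eq_zero.mp this).resolve_left h2
  have key : (d.1 ^ 2 + d.2 ^ 2) * (s.1 ^ 2 + s.2 ^ 2) = 0 := by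
    linear_combination (d.1 * s.1 + d.2 * s.2) * hds + (d.1 * s.2 - d.2 * s.1) * hcross
  rcases mul_eq_zero.mp key with h | h
  · left
    have h1 : d.1 = 0 := by nlinarith [sq_nonneg d.1, sq_nonneg d.2]
    have h2 : d.2 = 0 := by nlinarith [sq_nonneg d.1, sq_nonneg d.2]
    exact Prod.ext h1 h2
  · right
    have h1 : s.1 = 0 := by nlinarith [sq_nonneg s.1, sq_nonneg s.2]
    have h2 : s.2 = 0 := by nlinarith [sq_nonneg s.1, sq_nonneg s.2]
    exact Prod.ext h1 h2

lemma zygmund (n : ℤ) (ξ1 ξ2 ξ3 ξ4 : ℤ × ℤ)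
    (h1 : ξ1.1 ^ 2 + ξ1.2 ^ 2 = n) (h2 : ξ2.1 ^ 2 + ξ2.2 ^ 2 = n)
    (h3 : ξ3.1 ^ 2 + ξ3.2 ^ 2 = n) (h4 : ξ4.1 ^ 2 + ξ4.2 ^ 2 = n)
    (hsum : ξ1 + ξ2 + ξ3 + ξ4 = 0) :
    (ξ2 = -ξ1 ∧ ξ4 = -ξ3) ∨ (ξ3 = -ξ1 ∧ ξ4 = -ξ2) ∨ (ξ4 = -ξ1 ∧ ξ3 = -ξ2) := by
  have e41 : ξ4.1 = -(ξ1.1 + ξ2.1 + ξ3.1) := by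
    have := congrArg Prod.fst hsum
    simp only [Prod.fst_add, Prod.fst_zero] at this
    linarith
  have e42 : ξ4.2 = -(ξ1.2 + ξ2.2 + ξ3.2) := by
    have := congrArg Prod.snd hsum
    simp only [Prod.snd_add, Prod.snd_zero] at this
    linarith
  have h4c : (ξ1.1 + ξ2.1 + ξ3.1) ^ 2 + (ξ1.2 + ξ2.2 + ξ3.2) ^ 2 = n := by
    rw [e41, e42] at h4
    linarith [h4]
  have hP : ξ1.1 * ξ2.1 + ξ1.2 * ξ2.2 + (ξ1.1 * ξ3.1 + ξ1.2 * ξ3.2)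
      + (ξ2.1 * ξ3.1 + ξ2.2 * ξ3.2) + n = 0 := by
    nlinarith [h4c, h1, h2, h3]
  by_cases hv : ξ1 + ξ2 = 0
  · left
    have e2 : ξ2 = -ξ1 := eq_neg_of_add_eq_zero_right hv
    have h34 : ξ3 + ξ4 = 0 := by
      have h := hsum
      rw [show ξ1 + ξ2 + ξ3 + ξ4 = ξ1 + ξ2 + (ξ3 + ξ4) by ring, hv, zero_add] at h
      exact h
    exact ⟨e2, eq_neg_of_add_eq_zero_right h34⟩
  · have hd : (ξ1 + ξ3).1 * (ξ1 + ξ2).1 + (ξ1 + ξ3).2 * (ξ1 + ξ2).2 = 0 := by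
      simp only [Prod.fst_add, Prod.snd_add]
      linear_combination h1 + hP
    have hs : (ξ1 + ξ4).1 * (ξ1 + ξ2).1 + (ξ1 + ξ4).2 * (ξ1 + ξ2).2 = 0 := by
      simp only [Prod.fst_add, Prod.snd_add]
      rw [e41, e42]
      linear_combination -h2 - hP
    have hds : (ξ1 + ξ3).1 * (ξ1 + ξ4).1 + (ξ1 + ξ3).2 * (ξ1 + ξ4).2 = 0 := by
      simp only [Prod.fst_add, Prod.snd_add]
      rw [e41, e42]
      linear_combination -h3 - hP
    rcases perp_perp (ξ1 + ξ2) (ξ1 + ξ3) (ξ1 + ξ4) hv hd hs hds with h | h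
    · right; left
      have e3 : ξ3 = -ξ1 := eq_neg_of_add_eq_zero_right h
      refine ⟨e3, ?_⟩
      have h24 : ξ2 + ξ4 = 0 := by
        have hh := hsum
        rw [show ξ1 + ξ2 + ξ3 + ξ4 = (ξ1 + ξ3) + (ξ2 + ξ4) by ring, h, zero_add] at hh
        exact hh
      exact eq_neg_of_add_eq_zero_right h24
    · right; right
      have e4 : ξ4 = -ξ1 := eq_neg_of_add_eq_zero_right h
      refine ⟨e4, ?_⟩
      have h23 : ξ2 + ξ3 = 0 := by
        have hh := hsum
        rw [show ξ1 + ξ2 + ξ3 + ξ4 = (ξ1 + ξ4) + (ξ2 + ξ3) by ring, h, zero_add] at hh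
        exact hh
      exact eq_neg_of_add_eq_zero_right h23
lemma ite_ie {D A B C AB AC BC : Prop} [Decidable D] [Decidable A] [Decidable B] [Decidable C]
    [Decidable AB] [Decidable AC] [Decidable BC]
    (h : D ↔ A ∨ B ∨ C) (hab : AB ↔ A ∧ B) (hac : AC ↔ A ∧ C) (hbc : BC ↔ B ∧ C)
    (habc : ¬(A ∧ B ∧ C)) (x : ℂ) :
    (if D then x else 0) = (if A then x else 0) + (if B then x else 0) + (if C then x else 0)
      - (if AB then x else 0) - (if AC then x else 0) - (if BC then x else 0) := by
  by_cases hA : A <;> by_cases hB : B <;> by_cases hC : C <;> simp_all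

lemma collapse {Λ : Finset (ℤ × ℤ)} {t : ℤ × ℤ} (ht : t ∈ Λ) (R : Prop) [Decidable R]
    (f : (ℤ × ℤ) → ℂ) :
    (∑ ξ ∈ Λ, if ξ = t ∧ R then f ξ else 0) = if R then f t else 0 := by
  by_cases hR : R <;> simp [hR, Finset.sum_ite_eq', ht]

lemma collapse1 {Λ : Finset (ℤ × ℤ)} {t : ℤ × ℤ} (ht : t ∈ Λ) (f : (ℤ × ℤ) → ℂ) :
    (∑ ξ ∈ Λ, if ξ = t then f ξ else 0) = f t := by
  simp [Finset.sum_ite_eq', ht]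

lemma quad_sum (n : ℤ) (hn : 0 < n) (Λ : Finset (ℤ × ℤ))
    (hΛ : ∀ ξ : ℤ × ℤ, ξ ∈ Λ ↔ ξ.1 ^ 2 + ξ.2 ^ 2 = n)
    (a : ℤ × ℤ → ℂ) (hconj : ∀ ξ, a (-ξ) = starRingEnd ℂ (a ξ)) :
    (∑ ξ1 ∈ Λ, ∑ ξ2 ∈ Λ, ∑ ξ3 ∈ Λ, ∑ ξ4 ∈ Λ,
      if ξ1 + ξ2 + ξ3 + ξ4 = 0 then a ξ1 * a ξ2 * a ξ3 * a ξ4 else 0)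
    = 3 * (∑ ξ ∈ Λ, (Complex.normSq (a ξ) : ℂ)) ^ 2
      - 3 * ∑ ξ ∈ Λ, (Complex.normSq (a ξ) : ℂ) ^ 2 := by
  have hneg : ∀ ξ ∈ Λ, -ξ ∈ Λ := by
    intro ξ h
    rw [hΛ] at h ⊢
    simp only [Prod.fst_neg, Prod.snd_neg]
    linarith [h]
  have hnz : ∀ ξ ∈ Λ, ξ ≠ 0 := by
    intro ξ h h0
    rw [hΛ, h0] at h
    simp at h
    omega
  have hselfneg : ∀ ξ : ℤ × ℤ, ξ = -ξ → ξ = 0 := by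
    intro ξ h
    have ha := congrArg Prod.fst h
    have hb := congrArg Prod.snd h
    simp only [Prod.fst_neg, Prod.snd_neg] at ha hb
    simp only [Prod.ext_iff, Prod.fst_zero, Prod.snd_zero]
    omega
  have habs2 : ∀ ξ, a ξ * a (-ξ) = (Complex.normSq (a ξ) : ℂ) := fun ξ => by
    rw [hconj, Complex.mul_conj]
  have step1 : (∑ ξ1 ∈ Λ, ∑ ξ2 ∈ Λ, ∑ ξ3 ∈ Λ, ∑ ξ4 ∈ Λ,
      if ξ1 + ξ2 + ξ3 + ξ4 = 0 then a ξ1 * a ξ2 * a ξ3 * a ξ4 else 0)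
      = ∑ ξ1 ∈ Λ, ∑ ξ2 ∈ Λ, ∑ ξ3 ∈ Λ, ∑ ξ4 ∈ Λ,
        ((if ξ4 = -ξ3 ∧ ξ2 = -ξ1 then a ξ1 * a ξ2 * a ξ3 * a ξ4 else 0)
        + (if ξ4 = -ξ2 ∧ ξ3 = -ξ1 then a ξ1 * a ξ2 * a ξ3 * a ξ4 else 0)
        + (if ξ4 = -ξ1 ∧ ξ3 = -ξ2 then a ξ1 * a ξ2 * a ξ3 * a ξ4 else 0)
        - (if ξ4 = ξ1 ∧ (ξ3 = -ξ1 ∧ ξ2 = -ξ1) then a ξ1 * a ξ2 * a ξ3 * a ξ4 else 0)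
        - (if ξ4 = -ξ1 ∧ (ξ3 = ξ1 ∧ ξ2 = -ξ1) then a ξ1 * a ξ2 * a ξ3 * a ξ4 else 0)
        - (if ξ4 = -ξ1 ∧ (ξ3 = -ξ1 ∧ ξ2 = ξ1) then a ξ1 * a ξ2 * a ξ3 * a ξ4 else 0)) := by
    refine Finset.sum_congr rfl fun ξ1 h1 => Finset.sum_congr rfl fun ξ2 h2 =>
      Finset.sum_congr rfl fun ξ3 h3 => Finset.sum_congr rfl fun ξ4 h4 => ?_
    have hone : ξ1 ≠ -ξ1 := fun h => hnz ξ1 h1 (hselfneg ξ1 h)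
    apply ite_ie
    · constructor
      · intro hsum
        rcases zygmund n ξ1 ξ2 ξ3 ξ4 ((hΛ ξ1).mp h1) ((hΛ ξ2).mp h2) ((hΛ ξ3).mp h3)
          ((hΛ ξ4).mp h4) hsum with ⟨e2, e4⟩ | ⟨e3, e4⟩ | ⟨e4, e3⟩
        · exact Or.inl ⟨e4, e2⟩
        · exact Or.inr (Or.inl ⟨e4, e3⟩)
        · exact Or.inr (Or.inr ⟨e4, e3⟩)
      · rintro (⟨e4, e2⟩ | ⟨e4, e3⟩ | ⟨e4, e3⟩) <;> subst_vars <;> ring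
    · constructor
      · rintro ⟨h41, h31, h21⟩
        exact ⟨⟨by rw [h41, h31, neg_neg], h21⟩, ⟨by rw [h41, h21, neg_neg], h31⟩⟩
      · rintro ⟨⟨h43, h21⟩, ⟨h42, h31⟩⟩
        exact ⟨by rw [h42, h21, neg_neg], h31, h21⟩
    · constructor
      · rintro ⟨h41, h31, h21⟩
        exact ⟨⟨by rw [h41, h31], h21⟩, ⟨h41, by rw [h31, h21, neg_neg]⟩⟩
      · rintro ⟨⟨h43, h21⟩, ⟨h41, h32⟩⟩
        exact ⟨h41, by rw [h32, h21, neg_neg], h21⟩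
    · constructor
      · rintro ⟨h41, h31, h21⟩
        exact ⟨⟨by rw [h41, h21], h31⟩, ⟨h41, by rw [h31, h21]⟩⟩
      · rintro ⟨⟨h42, h31⟩, ⟨h41, h32⟩⟩
        exact ⟨h41, h31, neg_injective (h32.symm.trans h31)⟩
    · rintro ⟨⟨h43, h21⟩, ⟨h42, h31⟩, ⟨h41, h32⟩⟩
      have e : ξ3 = ξ1 := by rw [h32, h21, neg_neg]
      exact hnz ξ1 h1 (hselfneg ξ1 (e.symm.trans h31))
  rw [step1]
  simp only [Finset.sum_add_distrib, Finset.sum_sub_distrib]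
  have TA : (∑ ξ1 ∈ Λ, ∑ ξ2 ∈ Λ, ∑ ξ3 ∈ Λ, ∑ ξ4 ∈ Λ,
      if ξ4 = -ξ3 ∧ ξ2 = -ξ1 then a ξ1 * a ξ2 * a ξ3 * a ξ4 else 0)
      = (∑ ξ ∈ Λ, (Complex.normSq (a ξ) : ℂ)) ^ 2 := by
    calc (∑ ξ1 ∈ Λ, ∑ ξ2 ∈ Λ, ∑ ξ3 ∈ Λ, ∑ ξ4 ∈ Λ,
        if ξ4 = -ξ3 ∧ ξ2 = -ξ1 then a ξ1 * a ξ2 * a ξ3 * a ξ4 else 0)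
        = ∑ ξ1 ∈ Λ, ∑ ξ2 ∈ Λ, ∑ ξ3 ∈ Λ,
            (if ξ2 = -ξ1 then a ξ1 * a ξ2 * a ξ3 * a (-ξ3) else 0) := by
          refine Finset.sum_congr rfl fun ξ1 h1 => Finset.sum_congr rfl fun ξ2 h2 =>
            Finset.sum_congr rfl fun ξ3 h3 => ?_
          exact collapse (hneg ξ3 h3) _ _
      _ = ∑ ξ1 ∈ Λ, ∑ ξ3 ∈ Λ, ∑ ξ2 ∈ Λ,
            (if ξ2 = -ξ1 then a ξ1 * a ξ2 * a ξ3 * a (-ξ3) else 0) := by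
          exact Finset.sum_congr rfl fun ξ1 _ => Finset.sum_comm
      _ = ∑ ξ1 ∈ Λ, ∑ ξ3 ∈ Λ, a ξ1 * a (-ξ1) * a ξ3 * a (-ξ3) := by
          refine Finset.sum_congr rfl fun ξ1 h1 => Finset.sum_congr rfl fun ξ3 h3 => ?_
          exact collapse1 (hneg ξ1 h1) _
      _ = ∑ ξ1 ∈ Λ, ∑ ξ3 ∈ Λ, (Complex.normSq (a ξ1) : ℂ) * (Complex.normSq (a ξ3) : ℂ) := by
          refine Finset.sum_congr rfl fun ξ1 _ => Finset.sum_congr rfl fun ξ3 _ => ?_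
          rw [show a ξ1 * a (-ξ1) * a ξ3 * a (-ξ3)
            = (a ξ1 * a (-ξ1)) * (a ξ3 * a (-ξ3)) by ring, habs2, habs2]
      _ = (∑ ξ ∈ Λ, (Complex.normSq (a ξ) : ℂ)) ^ 2 := by
          rw [sq, Finset.sum_mul_sum]
  have TB : (∑ ξ1 ∈ Λ, ∑ ξ2 ∈ Λ, ∑ ξ3 ∈ Λ, ∑ ξ4 ∈ Λ,
      if ξ4 = -ξ2 ∧ ξ3 = -ξ1 then a ξ1 * a ξ2 * a ξ3 * a ξ4 else 0)
      = (∑ ξ ∈ Λ, (Complex.normSq (a ξ) : ℂ)) ^ 2 := by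
    calc (∑ ξ1 ∈ Λ, ∑ ξ2 ∈ Λ, ∑ ξ3 ∈ Λ, ∑ ξ4 ∈ Λ,
        if ξ4 = -ξ2 ∧ ξ3 = -ξ1 then a ξ1 * a ξ2 * a ξ3 * a ξ4 else 0)
        = ∑ ξ1 ∈ Λ, ∑ ξ2 ∈ Λ, ∑ ξ3 ∈ Λ,
            (if ξ3 = -ξ1 then a ξ1 * a ξ2 * a ξ3 * a (-ξ2) else 0) := by
          refine Finset.sum_congr rfl fun ξ1 h1 => Finset.sum_congr rfl fun ξ2 h2 =>
            Finset.sum_congr rfl fun ξ3 h3 => ?_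
          exact collapse (hneg ξ2 h2) _ _
      _ = ∑ ξ1 ∈ Λ, ∑ ξ2 ∈ Λ, a ξ1 * a ξ2 * a (-ξ1) * a (-ξ2) := by
          refine Finset.sum_congr rfl fun ξ1 h1 => Finset.sum_congr rfl fun ξ2 h2 => ?_
          exact collapse1 (hneg ξ1 h1) _
      _ = ∑ ξ1 ∈ Λ, ∑ ξ2 ∈ Λ, (Complex.normSq (a ξ1) : ℂ) * (Complex.normSq (a ξ2) : ℂ) := by
          refine Finset.sum_congr rfl fun ξ1 _ => Finset.sum_congr rfl fun ξ2 _ => ?_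
          rw [show a ξ1 * a ξ2 * a (-ξ1) * a (-ξ2)
            = (a ξ1 * a (-ξ1)) * (a ξ2 * a (-ξ2)) by ring, habs2, habs2]
      _ = (∑ ξ ∈ Λ, (Complex.normSq (a ξ) : ℂ)) ^ 2 := by
          rw [sq, Finset.sum_mul_sum]
  have TC : (∑ ξ1 ∈ Λ, ∑ ξ2 ∈ Λ, ∑ ξ3 ∈ Λ, ∑ ξ4 ∈ Λ,
      if ξ4 = -ξ1 ∧ ξ3 = -ξ2 then a ξ1 * a ξ2 * a ξ3 * a ξ4 else 0)
      = (∑ ξ ∈ Λ, (Complex.normSq (a ξ) : ℂ)) ^ 2 := by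
    calc (∑ ξ1 ∈ Λ, ∑ ξ2 ∈ Λ, ∑ ξ3 ∈ Λ, ∑ ξ4 ∈ Λ,
        if ξ4 = -ξ1 ∧ ξ3 = -ξ2 then a ξ1 * a ξ2 * a ξ3 * a ξ4 else 0)
        = ∑ ξ1 ∈ Λ, ∑ ξ2 ∈ Λ, ∑ ξ3 ∈ Λ,
            (if ξ3 = -ξ2 then a ξ1 * a ξ2 * a ξ3 * a (-ξ1) else 0) := by
          refine Finset.sum_congr rfl fun ξ1 h1 => Finset.sum_congr rfl fun ξ2 h2 =>
            Finset.sum_congr rfl fun ξ3 h3 => ?_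
          exact collapse (hneg ξ1 h1) _ _
      _ = ∑ ξ1 ∈ Λ, ∑ ξ2 ∈ Λ, a ξ1 * a ξ2 * a (-ξ2) * a (-ξ1) := by
          refine Finset.sum_congr rfl fun ξ1 h1 => Finset.sum_congr rfl fun ξ2 h2 => ?_
          exact collapse1 (hneg ξ2 h2) _
      _ = ∑ ξ1 ∈ Λ, ∑ ξ2 ∈ Λ, (Complex.normSq (a ξ1) : ℂ) * (Complex.normSq (a ξ2) : ℂ) := by
          refine Finset.sum_congr rfl fun ξ1 _ => Finset.sum_congr rfl fun ξ2 _ => ?_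
          rw [show a ξ1 * a ξ2 * a (-ξ2) * a (-ξ1)
            = (a ξ1 * a (-ξ1)) * (a ξ2 * a (-ξ2)) by ring, habs2, habs2]
      _ = (∑ ξ ∈ Λ, (Complex.normSq (a ξ) : ℂ)) ^ 2 := by
          rw [sq, Finset.sum_mul_sum]
  have TAB : (∑ ξ1 ∈ Λ, ∑ ξ2 ∈ Λ, ∑ ξ3 ∈ Λ, ∑ ξ4 ∈ Λ,
      if ξ4 = ξ1 ∧ (ξ3 = -ξ1 ∧ ξ2 = -ξ1) then a ξ1 * a ξ2 * a ξ3 * a ξ4 else 0)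
      = ∑ ξ ∈ Λ, (Complex.normSq (a ξ) : ℂ) ^ 2 := by
    calc (∑ ξ1 ∈ Λ, ∑ ξ2 ∈ Λ, ∑ ξ3 ∈ Λ, ∑ ξ4 ∈ Λ,
        if ξ4 = ξ1 ∧ (ξ3 = -ξ1 ∧ ξ2 = -ξ1) then a ξ1 * a ξ2 * a ξ3 * a ξ4 else 0)
        = ∑ ξ1 ∈ Λ, ∑ ξ2 ∈ Λ, ∑ ξ3 ∈ Λ,
            (if ξ3 = -ξ1 ∧ ξ2 = -ξ1 then a ξ1 * a ξ2 * a ξ3 * a ξ1 else 0) := by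
          refine Finset.sum_congr rfl fun ξ1 h1 => Finset.sum_congr rfl fun ξ2 h2 =>
            Finset.sum_congr rfl fun ξ3 h3 => ?_
          exact collapse h1 _ _
      _ = ∑ ξ1 ∈ Λ, ∑ ξ2 ∈ Λ,
            (if ξ2 = -ξ1 then a ξ1 * a ξ2 * a (-ξ1) * a ξ1 else 0) := by
          refine Finset.sum_congr rfl fun ξ1 h1 => Finset.sum_congr rfl fun ξ2 h2 => ?_
          exact collapse (hneg ξ1 h1) _ _
      _ = ∑ ξ1 ∈ Λ, a ξ1 * a (-ξ1) * a (-ξ1) * a ξ1 := by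
          refine Finset.sum_congr rfl fun ξ1 h1 => ?_
          exact collapse1 (hneg ξ1 h1) _
      _ = ∑ ξ ∈ Λ, (Complex.normSq (a ξ) : ℂ) ^ 2 := by
          refine Finset.sum_congr rfl fun ξ _ => ?_
          rw [show a ξ * a (-ξ) * a (-ξ) * a ξ = (a ξ * a (-ξ)) * (a ξ * a (-ξ)) by ring,
            habs2, ← sq]
  have TAC : (∑ ξ1 ∈ Λ, ∑ ξ2 ∈ Λ, ∑ ξ3 ∈ Λ, ∑ ξ4 ∈ Λ,
      if ξ4 = -ξ1 ∧ (ξ3 = ξ1 ∧ ξ2 = -ξ1) then a ξ1 * a ξ2 * a ξ3 * a ξ4 else 0)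
      = ∑ ξ ∈ Λ, (Complex.normSq (a ξ) : ℂ) ^ 2 := by
    calc (∑ ξ1 ∈ Λ, ∑ ξ2 ∈ Λ, ∑ ξ3 ∈ Λ, ∑ ξ4 ∈ Λ,
        if ξ4 = -ξ1 ∧ (ξ3 = ξ1 ∧ ξ2 = -ξ1) then a ξ1 * a ξ2 * a ξ3 * a ξ4 else 0)
        = ∑ ξ1 ∈ Λ, ∑ ξ2 ∈ Λ, ∑ ξ3 ∈ Λ,
            (if ξ3 = ξ1 ∧ ξ2 = -ξ1 then a ξ1 * a ξ2 * a ξ3 * a (-ξ1) else 0) := by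
          refine Finset.sum_congr rfl fun ξ1 h1 => Finset.sum_congr rfl fun ξ2 h2 =>
            Finset.sum_congr rfl fun ξ3 h3 => ?_
          exact collapse (hneg ξ1 h1) _ _
      _ = ∑ ξ1 ∈ Λ, ∑ ξ2 ∈ Λ,
            (if ξ2 = -ξ1 then a ξ1 * a ξ2 * a ξ1 * a (-ξ1) else 0) := by
          refine Finset.sum_congr rfl fun ξ1 h1 => Finset.sum_congr rfl fun ξ2 h2 => ?_
          exact collapse h1 _ _
      _ = ∑ ξ1 ∈ Λ, a ξ1 * a (-ξ1) * a ξ1 * a (-ξ1) := by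
          refine Finset.sum_congr rfl fun ξ1 h1 => ?_
          exact collapse1 (hneg ξ1 h1) _
      _ = ∑ ξ ∈ Λ, (Complex.normSq (a ξ) : ℂ) ^ 2 := by
          refine Finset.sum_congr rfl fun ξ _ => ?_
          rw [show a ξ * a (-ξ) * a ξ * a (-ξ) = (a ξ * a (-ξ)) * (a ξ * a (-ξ)) by ring,
            habs2, ← sq]
  have TBC : (∑ ξ1 ∈ Λ, ∑ ξ2 ∈ Λ, ∑ ξ3 ∈ Λ, ∑ ξ4 ∈ Λ,
      if ξ4 = -ξ1 ∧ (ξ3 = -ξ1 ∧ ξ2 = ξ1) then a ξ1 * a ξ2 * a ξ3 * a ξ4 else 0)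
      = ∑ ξ ∈ Λ, (Complex.normSq (a ξ) : ℂ) ^ 2 := by
    calc (∑ ξ1 ∈ Λ, ∑ ξ2 ∈ Λ, ∑ ξ3 ∈ Λ, ∑ ξ4 ∈ Λ,
        if ξ4 = -ξ1 ∧ (ξ3 = -ξ1 ∧ ξ2 = ξ1) then a ξ1 * a ξ2 * a ξ3 * a ξ4 else 0)
        = ∑ ξ1 ∈ Λ, ∑ ξ2 ∈ Λ, ∑ ξ3 ∈ Λ,
            (if ξ3 = -ξ1 ∧ ξ2 = ξ1 then a ξ1 * a ξ2 * a ξ3 * a (-ξ1) else 0) := by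
          refine Finset.sum_congr rfl fun ξ1 h1 => Finset.sum_congr rfl fun ξ2 h2 =>
            Finset.sum_congr rfl fun ξ3 h3 => ?_
          exact collapse (hneg ξ1 h1) _ _
      _ = ∑ ξ1 ∈ Λ, ∑ ξ2 ∈ Λ,
            (if ξ2 = ξ1 then a ξ1 * a ξ2 * a (-ξ1) * a (-ξ1) else 0) := by
          refine Finset.sum_congr rfl fun ξ1 h1 => Finset.sum_congr rfl fun ξ2 h2 => ?_
          exact collapse (hneg ξ1 h1) _ _
      _ = ∑ ξ1 ∈ Λ, a ξ1 * a ξ1 * a (-ξ1) * a (-ξ1) := by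
          refine Finset.sum_congr rfl fun ξ1 h1 => ?_
          exact collapse1 h1 _
      _ = ∑ ξ ∈ Λ, (Complex.normSq (a ξ) : ℂ) ^ 2 := by
          refine Finset.sum_congr rfl fun ξ _ => ?_
          rw [show a ξ * a ξ * a (-ξ) * a (-ξ) = (a ξ * a (-ξ)) * (a ξ * a (-ξ)) by ring,
            habs2, ← sq]
  rw [TA, TB, TC, TAB, TAC, TBC]
  ring
lemma sum_pow_four (s : Finset (ℤ × ℤ)) (f : (ℤ × ℤ) → ℂ) :
    (∑ i ∈ s, f i) ^ 4
      = ∑ i ∈ s, ∑ j ∈ s, ∑ k ∈ s, ∑ l ∈ s, f i * (f j * (f k * f l)) := by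
  rw [show (∑ i ∈ s, f i) ^ 4 = (∑ i ∈ s, f i) *
    ((∑ i ∈ s, f i) * ((∑ i ∈ s, f i) * (∑ i ∈ s, f i))) by ring]
  simp only [Finset.mul_sum, Finset.sum_mul]
  exact Finset.sum_congr rfl fun _ _ => Finset.sum_congr rfl fun _ _ =>
    Finset.sum_congr rfl fun _ _ => Finset.sum_congr rfl fun _ _ => by ring

lemma pair_sum (Λ : Finset (ℤ × ℤ)) (hneg : ∀ ξ ∈ Λ, -ξ ∈ Λ)
    (a : ℤ × ℤ → ℂ) (hconj : ∀ ξ, a (-ξ) = starRingEnd ℂ (a ξ)) :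
    (∑ ξ1 ∈ Λ, ∑ ξ2 ∈ Λ, if ξ1 + ξ2 = 0 then a ξ1 * a ξ2 else 0)
      = ∑ ξ ∈ Λ, (Complex.normSq (a ξ) : ℂ) := by
  refine Finset.sum_congr rfl fun ξ1 h1 => ?_
  have hcond : ∀ ξ2 : ℤ × ℤ, (ξ1 + ξ2 = 0) = (ξ2 = -ξ1) := by
    intro ξ2
    apply propext
    constructor
    · intro h; exact eq_neg_of_add_eq_zero_right h
    · intro h; simp [h]
  simp only [hcond]
  rw [collapse1 (hneg ξ1 h1), hconj, Complex.mul_conj]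

/-- for `n` not a perfect square, with
`Λ_n⁺ = {ξ ∈ Λ_n : ξ₂ > 0}` one has `#Λ_n⁺ = N_n/2`, and for the (real-valued)
arithmetic random wave `T_n` and `H₄(t) = t⁴ - 6t² + 3`,
`∫_{𝕋²} H₄(T_n) = (6/N_n)((N_n/2)^{-1/2} Σ_{ξ∈Λ_n⁺}(|a_ξ|²-1))²
  - (3/N_n²) Σ_{ξ∈Λ_n} |a_ξ|⁴`.
The torus is realized as the unit square `[0,1]² ⊆ ℝ²`. -/
theorem fourth_hermite_integral_arithmetic_random_wave
    (n : ℕ) (hn : 1 ≤ n) (hnotsq : ¬∃ m : ℕ, m ^ 2 = n)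
    (Λ : Finset (ℤ × ℤ))
    (hΛ : ∀ ξ : ℤ × ℤ, ξ ∈ Λ ↔ ξ.1 ^ 2 + ξ.2 ^ 2 = (n : ℤ))
    (hne : Λ.Nonempty)
    (a : ℤ × ℤ → ℂ)
    (hconj : ∀ ξ, a (-ξ) = starRingEnd ℂ (a ξ))
    (T : ℝ × ℝ → ℝ)
    (hT : ∀ x, (T x : ℂ) = (1 / (Real.sqrt Λ.card : ℂ)) *
      ∑ ξ ∈ Λ, a ξ * Complex.exp (2 * Real.pi * Complex.I *
        ((ξ.1 : ℂ) * (x.1 : ℂ) + (ξ.2 : ℂ) * (x.2 : ℂ)))) :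
    (Λ.filter (fun ξ => 0 < ξ.2)).card = Λ.card / 2 ∧
    ∫ x in Set.Icc ((0 : ℝ), (0 : ℝ)) ((1 : ℝ), (1 : ℝ)),
        ((T x) ^ 4 - 6 * (T x) ^ 2 + 3)
      = (6 / (Λ.card : ℝ)) *
          (((Λ.card : ℝ) / 2) ^ (-(1 : ℝ) / 2) *
            ∑ ξ ∈ Λ.filter (fun ξ => 0 < ξ.2), (‖a ξ‖ ^ 2 - 1)) ^ 2
        - (3 / (Λ.card : ℝ) ^ 2) * ∑ ξ ∈ Λ, ‖a ξ‖ ^ 4 := by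
  have hn' : (0 : ℤ) < (n : ℤ) := by exact_mod_cast hn
  have hneg : ∀ ξ ∈ Λ, -ξ ∈ Λ := by
    intro ξ h
    rw [hΛ] at h ⊢
    simp only [Prod.fst_neg, Prod.snd_neg]
    linarith [h]
  have hsnd : ∀ ξ ∈ Λ, ξ.2 ≠ 0 := by
    intro ξ h h0
    rw [hΛ] at h
    rw [h0] at h
    simp only [ne_eq, OfNat.ofNat_ne_zero, not_false_eq_true, zero_pow, add_zero] at h
    refine hnotsq ⟨ξ.1.natAbs, ?_⟩
    have h2 : ((ξ.1.natAbs : ℤ)) ^ 2 = (n : ℤ) := by rwa [Int.natAbs_sq]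
    exact_mod_cast h2
  -- Part 1 : cardinality
  have hfilter : Λ.filter (fun ξ => ¬ 0 < ξ.2) = Λ.filter (fun ξ => ξ.2 < 0) :=
    Finset.filter_congr (fun ξ hξ => by have := hsnd ξ hξ; omega)
  have hbijcard : (Λ.filter fun ξ => 0 < ξ.2).card = (Λ.filter fun ξ => ξ.2 < 0).card := by
    refine Finset.card_bij' (fun ξ _ => -ξ) (fun ξ _ => -ξ) ?_ ?_ ?_ ?_
    · intro ξ hξ
      simp only [Finset.mem_filter] at hξ ⊢
      exact ⟨hneg _ hξ.1, by simp only [Prod.snd_neg]; omega⟩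
    · intro ξ hξ
      simp only [Finset.mem_filter] at hξ ⊢
      exact ⟨hneg _ hξ.1, by simp only [Prod.snd_neg]; omega⟩
    · intro ξ _; simp
    · intro ξ _; simp
  have hcardtot := Finset.card_filter_add_card_filter_not (s := Λ) (fun ξ => 0 < ξ.2)
  rw [hfilter] at hcardtot
  have part1 : (Λ.filter (fun ξ => 0 < ξ.2)).card = Λ.card / 2 := by omega
  refine ⟨part1, ?_⟩
  -- notation
  have hNpos : (0 : ℝ) < (Λ.card : ℝ) := by
    exact_mod_cast Finset.card_pos.mpr hne
  have hNne : ((Λ.card : ℝ)) ≠ 0 := ne_of_gt hNpos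
  have hNCne : ((Λ.card : ℂ)) ≠ 0 :=
    Nat.cast_ne_zero.mpr (Finset.card_pos.mpr hne).ne'
  -- real sums
  have habs4 : (∑ ξ ∈ Λ, ‖a ξ‖ ^ 4)
      = ∑ ξ ∈ Λ, (Complex.normSq (a ξ)) ^ 2 :=
    Finset.sum_congr rfl fun ξ _ => by
      rw [show ‖a ξ‖ ^ 4 = (‖a ξ‖ ^ 2) ^ 2 by ring, Complex.sq_norm]
  have hplus : (∑ ξ ∈ Λ.filter (fun ξ => 0 < ξ.2), (‖a ξ‖ ^ 2 - 1))
      = ∑ ξ ∈ Λ.filter (fun ξ => 0 < ξ.2), ((Complex.normSq (a ξ)) - 1) :=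
    Finset.sum_congr rfl fun ξ _ => by rw [Complex.sq_norm]
  have hflip : (∑ ξ ∈ Λ.filter (fun ξ => ξ.2 < 0), ((Complex.normSq (a ξ)) - 1))
      = ∑ ξ ∈ Λ.filter (fun ξ => 0 < ξ.2), ((Complex.normSq (a ξ)) - 1) := by
    refine Finset.sum_nbij' (fun ξ => -ξ) (fun ξ => -ξ) ?_ ?_ ?_ ?_ ?_
    · intro ξ hξ
      simp only [Finset.mem_filter] at hξ ⊢
      exact ⟨hneg _ hξ.1, by simp only [Prod.snd_neg]; omega⟩
    · intro ξ hξ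
      simp only [Finset.mem_filter] at hξ ⊢
      exact ⟨hneg _ hξ.1, by simp only [Prod.snd_neg]; omega⟩
    · intro ξ _; simp
    · intro ξ _; simp
    · intro ξ _
      rw [hconj, Complex.normSq_conj]
  have hP2 : 2 * (∑ ξ ∈ Λ.filter (fun ξ => 0 < ξ.2), ((Complex.normSq (a ξ)) - 1))
      = (∑ ξ ∈ Λ, Complex.normSq (a ξ)) - (Λ.card : ℝ) := by
    have hsplit := Finset.sum_filter_add_sum_filter_not Λ (fun ξ => 0 < ξ.2)
      (fun ξ => (Complex.normSq (a ξ)) - 1)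
    rw [show Λ.filter (fun ξ => ¬ 0 < ξ.2) = Λ.filter (fun ξ => ξ.2 < 0) from hfilter,
      hflip] at hsplit
    have htot : (∑ ξ ∈ Λ, ((Complex.normSq (a ξ)) - 1))
        = (∑ ξ ∈ Λ, Complex.normSq (a ξ)) - (Λ.card : ℝ) := by
      rw [Finset.sum_sub_distrib, Finset.sum_const, nsmul_eq_mul, mul_one]
    linarith [hsplit, htot]
  -- rpow fact
  have hrpow : ((((Λ.card : ℝ)) / 2) ^ (-(1:ℝ)/2)) ^ 2 = (2 / ((Λ.card : ℝ))) := by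
    have ht : (0:ℝ) < ((Λ.card : ℝ)) / 2 := by linarith
    rw [← Real.rpow_natCast ((((Λ.card : ℝ)) / 2) ^ (-(1:ℝ)/2)) 2, ← Real.rpow_mul ht.le]
    norm_num
    rw [Real.rpow_neg_one, inv_div]
  -- the real RHS reduction
  have hRHS : (6 / (Λ.card : ℝ)) *
          (((Λ.card : ℝ) / 2) ^ (-(1 : ℝ) / 2) *
            ∑ ξ ∈ Λ.filter (fun ξ => 0 < ξ.2), (‖a ξ‖ ^ 2 - 1)) ^ 2
        - (3 / (Λ.card : ℝ) ^ 2) * ∑ ξ ∈ Λ, ‖a ξ‖ ^ 4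
      = (3 * ((∑ ξ ∈ Λ, Complex.normSq (a ξ)) - (Λ.card : ℝ)) ^ 2
          - 3 * ∑ ξ ∈ Λ, (Complex.normSq (a ξ)) ^ 2) / (Λ.card : ℝ) ^ 2 := by
    rw [habs4, hplus, mul_pow, hrpow]
    rw [show (∑ ξ ∈ Λ.filter (fun ξ => 0 < ξ.2), ((Complex.normSq (a ξ)) - 1))
      = ((∑ ξ ∈ Λ, Complex.normSq (a ξ)) - (Λ.card : ℝ)) / 2 by linarith [hP2]]
    field_simp
    ring
  rw [hRHS]
  -- move to ℂ
  rw [← Complex.ofReal_inj]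
  have hIR : ((∫ x in Set.Icc ((0 : ℝ), (0 : ℝ)) ((1 : ℝ), (1 : ℝ)),
        ((T x) ^ 4 - 6 * (T x) ^ 2 + 3) : ℝ) : ℂ)
      = ∫ x in Set.Icc ((0 : ℝ), (0 : ℝ)) ((1 : ℝ), (1 : ℝ)),
          (((T x) ^ 4 - 6 * (T x) ^ 2 + 3 : ℝ) : ℂ) :=
    (integral_ofReal (f := fun x => (T x) ^ 4 - 6 * (T x) ^ 2 + 3)).symm
  rw [hIR]
  have hcast : ∀ x : ℝ × ℝ, ((T x ^ 4 - 6 * T x ^ 2 + 3 : ℝ) : ℂ)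
      = ((T x : ℝ) : ℂ) ^ 4 - 6 * ((T x : ℝ) : ℂ) ^ 2 + 3 := by
    intro x; push_cast; ring
  simp only [hcast]
  set c : ℂ := 1 / (Real.sqrt Λ.card : ℂ) with hcdef
  have hTE : ∀ x, ((T x : ℝ) : ℂ) = c * ∑ ξ ∈ Λ, a ξ * Efn ξ x := hT
  have hWc : Continuous (fun x : ℝ × ℝ => ((T x : ℝ) : ℂ)) := by
    have heq : (fun x : ℝ × ℝ => ((T x : ℝ) : ℂ))
        = fun x => c * ∑ ξ ∈ Λ, a ξ * Efn ξ x := funext fun x => hTE x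
    rw [heq]
    exact continuous_const.mul
      (continuous_finset_sum _ fun ξ _ => continuous_const.mul (Efn_cont ξ))
  have hvol : volume (Set.Icc ((0:ℝ),(0:ℝ)) ((1:ℝ),(1:ℝ))) = 1 := by
    rw [Set.Icc_prod_eq, Measure.volume_eq_prod, Measure.prod_prod]
    simp [Real.volume_Icc]
  have hint4 : IntegrableOn (fun x => ((T x : ℝ) : ℂ) ^ 4)
      (Set.Icc ((0:ℝ),(0:ℝ)) ((1:ℝ),(1:ℝ))) volume :=
    ((hWc.pow 4).continuousOn).integrableOn_compact isCompact_Icc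
  have hint2 : IntegrableOn (fun x => 6 * ((T x : ℝ) : ℂ) ^ 2)
      (Set.Icc ((0:ℝ),(0:ℝ)) ((1:ℝ),(1:ℝ))) volume :=
    ((continuous_const.mul (hWc.pow 2)).continuousOn).integrableOn_compact isCompact_Icc
  have hint3 : IntegrableOn (fun _ : ℝ × ℝ => (3:ℂ))
      (Set.Icc ((0:ℝ),(0:ℝ)) ((1:ℝ),(1:ℝ))) volume := by
    refine (integrableOn_const_iff (C := (3:ℂ)) enorm_ne_top).mpr (Or.inr ?_)
    rw [hvol]
    exact ENNReal.one_lt_top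
  have hint42 : IntegrableOn (fun x => ((T x : ℝ) : ℂ) ^ 4 - 6 * ((T x : ℝ) : ℂ) ^ 2)
      (Set.Icc ((0:ℝ),(0:ℝ)) ((1:ℝ),(1:ℝ))) volume := hint4.sub hint2
  rw [integral_add hint42 hint3, integral_sub hint4 hint2,
    MeasureTheory.integral_const_mul]
  have hEint : ∀ (z : ℂ) (ζ : ℤ × ℤ), IntegrableOn (fun x => z * Efn ζ x)
      (Set.Icc ((0:ℝ),(0:ℝ)) ((1:ℝ),(1:ℝ))) volume := fun z ζ =>
    ((continuous_const.mul (Efn_cont ζ)).continuousOn).integrableOn_compact isCompact_Icc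
  have I3 : ∫ _x in Set.Icc ((0:ℝ),(0:ℝ)) ((1:ℝ),(1:ℝ)), (3:ℂ) = 3 := by
    rw [setIntegral_const, measureReal_def, hvol]
    simp
  have hW2 : ∀ x : ℝ × ℝ, ((T x : ℝ) : ℂ) ^ 2
      = ∑ ξ1 ∈ Λ, ∑ ξ2 ∈ Λ, (c ^ 2 * (a ξ1 * a ξ2)) * Efn (ξ1 + ξ2) x := by
    intro x
    rw [hTE x, mul_pow, show (∑ ξ ∈ Λ, a ξ * Efn ξ x) ^ 2
      = (∑ ξ ∈ Λ, a ξ * Efn ξ x) * (∑ ξ ∈ Λ, a ξ * Efn ξ x) from sq _,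
      Finset.sum_mul_sum, Finset.mul_sum]
    refine Finset.sum_congr rfl fun ξ1 _ => ?_
    rw [Finset.mul_sum]
    refine Finset.sum_congr rfl fun ξ2 _ => ?_
    rw [show a ξ1 * Efn ξ1 x * (a ξ2 * Efn ξ2 x)
      = (a ξ1 * a ξ2) * (Efn ξ1 x * Efn ξ2 x) by ring, Efn_mul]
    ring
  have I2 : ∫ x in Set.Icc ((0:ℝ),(0:ℝ)) ((1:ℝ),(1:ℝ)), ((T x : ℝ) : ℂ) ^ 2
      = c ^ 2 * ∑ ξ ∈ Λ, (Complex.normSq (a ξ) : ℂ) := by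
    calc ∫ x in Set.Icc ((0:ℝ),(0:ℝ)) ((1:ℝ),(1:ℝ)), ((T x : ℝ) : ℂ) ^ 2
        = ∫ x in Set.Icc ((0:ℝ),(0:ℝ)) ((1:ℝ),(1:ℝ)),
            ∑ ξ1 ∈ Λ, ∑ ξ2 ∈ Λ, (c ^ 2 * (a ξ1 * a ξ2)) * Efn (ξ1 + ξ2) x := by
          simp only [hW2]
      _ = ∑ ξ1 ∈ Λ, ∑ ξ2 ∈ Λ, (c ^ 2 * (a ξ1 * a ξ2)) * (if ξ1 + ξ2 = 0 then 1 else 0) := by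
          rw [integral_finset_sum _
            (fun ξ1 _ => integrable_finset_sum _ (fun ξ2 _ => hEint _ _))]
          refine Finset.sum_congr rfl fun ξ1 _ => ?_
          rw [integral_finset_sum _ (fun ξ2 _ => hEint _ _)]
          refine Finset.sum_congr rfl fun ξ2 _ => ?_
          rw [MeasureTheory.integral_const_mul, int2d]
      _ = c ^ 2 * ∑ ξ1 ∈ Λ, ∑ ξ2 ∈ Λ, (if ξ1 + ξ2 = 0 then a ξ1 * a ξ2 else 0) := by
          rw [Finset.mul_sum]
          refine Finset.sum_congr rfl fun ξ1 _ => ?_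
          rw [Finset.mul_sum]
          refine Finset.sum_congr rfl fun ξ2 _ => ?_
          by_cases h : ξ1 + ξ2 = 0 <;> simp [h] <;> ring
      _ = c ^ 2 * ∑ ξ ∈ Λ, (Complex.normSq (a ξ) : ℂ) := by
          rw [pair_sum Λ hneg a hconj]
  have hW4 : ∀ x : ℝ × ℝ, ((T x : ℝ) : ℂ) ^ 4
      = ∑ ξ1 ∈ Λ, ∑ ξ2 ∈ Λ, ∑ ξ3 ∈ Λ, ∑ ξ4 ∈ Λ,
          (c ^ 4 * (a ξ1 * a ξ2 * a ξ3 * a ξ4)) * Efn (ξ1 + ξ2 + ξ3 + ξ4) x := by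
    intro x
    rw [hTE x, mul_pow, sum_pow_four, Finset.mul_sum]
    refine Finset.sum_congr rfl fun ξ1 _ => ?_
    rw [Finset.mul_sum]
    refine Finset.sum_congr rfl fun ξ2 _ => ?_
    rw [Finset.mul_sum]
    refine Finset.sum_congr rfl fun ξ3 _ => ?_
    rw [Finset.mul_sum]
    refine Finset.sum_congr rfl fun ξ4 _ => ?_
    rw [show a ξ1 * Efn ξ1 x * (a ξ2 * Efn ξ2 x * (a ξ3 * Efn ξ3 x * (a ξ4 * Efn ξ4 x)))
      = (a ξ1 * a ξ2 * a ξ3 * a ξ4) * (Efn ξ1 x * (Efn ξ2 x * (Efn ξ3 x * Efn ξ4 x))) by ring,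
      Efn_mul, Efn_mul, Efn_mul,
      show ξ1 + (ξ2 + (ξ3 + ξ4)) = ξ1 + ξ2 + ξ3 + ξ4 by ring]
    ring
  have I4 : ∫ x in Set.Icc ((0:ℝ),(0:ℝ)) ((1:ℝ),(1:ℝ)), ((T x : ℝ) : ℂ) ^ 4
      = c ^ 4 * (3 * (∑ ξ ∈ Λ, (Complex.normSq (a ξ) : ℂ)) ^ 2
          - 3 * ∑ ξ ∈ Λ, (Complex.normSq (a ξ) : ℂ) ^ 2) := by
    calc ∫ x in Set.Icc ((0:ℝ),(0:ℝ)) ((1:ℝ),(1:ℝ)), ((T x : ℝ) : ℂ) ^ 4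
        = ∫ x in Set.Icc ((0:ℝ),(0:ℝ)) ((1:ℝ),(1:ℝ)),
            ∑ ξ1 ∈ Λ, ∑ ξ2 ∈ Λ, ∑ ξ3 ∈ Λ, ∑ ξ4 ∈ Λ,
              (c ^ 4 * (a ξ1 * a ξ2 * a ξ3 * a ξ4)) * Efn (ξ1 + ξ2 + ξ3 + ξ4) x := by
          simp only [hW4]
      _ = ∑ ξ1 ∈ Λ, ∑ ξ2 ∈ Λ, ∑ ξ3 ∈ Λ, ∑ ξ4 ∈ Λ,
            (c ^ 4 * (a ξ1 * a ξ2 * a ξ3 * a ξ4)) * (if ξ1 + ξ2 + ξ3 + ξ4 = 0 then 1 else 0) := by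
          rw [integral_finset_sum _ (fun ξ1 _ => integrable_finset_sum _ (fun ξ2 _ =>
            integrable_finset_sum _ (fun ξ3 _ => integrable_finset_sum _ (fun ξ4 _ =>
              hEint _ _))))]
          refine Finset.sum_congr rfl fun ξ1 _ => ?_
          rw [integral_finset_sum _ (fun ξ2 _ => integrable_finset_sum _ (fun ξ3 _ =>
            integrable_finset_sum _ (fun ξ4 _ => hEint _ _)))]
          refine Finset.sum_congr rfl fun ξ2 _ => ?_
          rw [integral_finset_sum _ (fun ξ3 _ => integrable_finset_sum _ (fun ξ4 _ =>
            hEint _ _))]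
          refine Finset.sum_congr rfl fun ξ3 _ => ?_
          rw [integral_finset_sum _ (fun ξ4 _ => hEint _ _)]
          refine Finset.sum_congr rfl fun ξ4 _ => ?_
          rw [MeasureTheory.integral_const_mul, int2d]
      _ = c ^ 4 * ∑ ξ1 ∈ Λ, ∑ ξ2 ∈ Λ, ∑ ξ3 ∈ Λ, ∑ ξ4 ∈ Λ,
            (if ξ1 + ξ2 + ξ3 + ξ4 = 0 then a ξ1 * a ξ2 * a ξ3 * a ξ4 else 0) := by
          rw [Finset.mul_sum]
          refine Finset.sum_congr rfl fun ξ1 _ => ?_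
          rw [Finset.mul_sum]
          refine Finset.sum_congr rfl fun ξ2 _ => ?_
          rw [Finset.mul_sum]
          refine Finset.sum_congr rfl fun ξ3 _ => ?_
          rw [Finset.mul_sum]
          refine Finset.sum_congr rfl fun ξ4 _ => ?_
          by_cases h : ξ1 + ξ2 + ξ3 + ξ4 = 0 <;> simp [h] <;> ring
      _ = c ^ 4 * (3 * (∑ ξ ∈ Λ, (Complex.normSq (a ξ) : ℂ)) ^ 2
          - 3 * ∑ ξ ∈ Λ, (Complex.normSq (a ξ) : ℂ) ^ 2) := by
          rw [quad_sum (n : ℤ) hn' Λ hΛ a hconj]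
  rw [I4, I2, I3]
  have hc2 : c ^ 2 = 1 / ((Λ.card : ℝ) : ℂ) := by
    rw [hcdef, div_pow, one_pow, ← Complex.ofReal_pow, Real.sq_sqrt (by positivity)]
  have hc4 : c ^ 4 = 1 / ((Λ.card : ℝ) : ℂ) ^ 2 := by
    rw [show c ^ 4 = (c ^ 2) ^ 2 by ring, hc2, div_pow, one_pow]
  rw [hc2, hc4]
  push_cast
  field_simp
  ring
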